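/- Let N ≥ 3 be an integer and define F : ℝ → ℝ by F(x) = |x|^{4/(N−2)} x. Then there exists a constant C = C(N) such that for all real numbers x ≠ 0 and y: | F(x + y) − F(x) − ((N+2)/(N−2)) |x|^{4/(N−2)} y | ≤ C ( 1_{{|y| ≤ |x|}} |y|² |x|^{(6−N)/(N−2)} + 1_{{|y| > |x|}} |y|^{(N+2)/(N−2)} ). -/

import Mathlib

set_option maxHeartbeats 1000000

open Real Set

lemma absF (p : ℝ) (hp : 0 < p) (z : ℝ) : |(|z| ^ p * z)| = |z| ^ (p + 1) := by
  rcases eq_or_ne z 0 with rfl | hz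
  · simp [Real.zero_rpow hp.ne', Real.zero_rpow (by linarith : (p+1:ℝ) ≠ 0)]
  · rw [abs_mul, abs_of_nonneg (Real.rpow_nonneg (abs_nonneg z) p),
      Real.rpow_add_one (abs_ne_zero.2 hz)]

lemma rpowLip (p m M a b : ℝ) (hp : 0 < p) (hm : 0 < m)
    (ha : a ∈ Set.Icc m M) (hb : b ∈ Set.Icc m M) :
    |a ^ p - b ^ p| ≤ p * (m ^ (p - 1) + M ^ (p - 1)) * |a - b| := by
  have hderiv : ∀ s ∈ Set.Icc m M, HasDerivWithinAt (fun t : ℝ => t ^ p)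
      (p * s ^ (p - 1)) (Set.Icc m M) s := fun s hs =>
    (Real.hasDerivAt_rpow_const (Or.inl (by linarith [hs.1] : s ≠ 0))).hasDerivWithinAt
  have hbound : ∀ s ∈ Set.Icc m M, ‖p * s ^ (p - 1)‖ ≤ p * (m ^ (p - 1) + M ^ (p - 1)) := by
    intro s hs
    have hs0 : 0 < s := lt_of_lt_of_le hm hs.1
    rw [Real.norm_eq_abs, abs_of_nonneg (by positivity)]
    have : s ^ (p - 1) ≤ m ^ (p - 1) + M ^ (p - 1) := by
      rcases le_total (p - 1) 0 with h | h
      · have := Real.rpow_le_rpow_of_nonpos hm hs.1 h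
        have h2 : (0:ℝ) ≤ M ^ (p - 1) := Real.rpow_nonneg (by linarith [hs.1, hs.2] : (0:ℝ) ≤ M) _
        linarith
      · have := Real.rpow_le_rpow hs0.le hs.2 h
        have h2 : (0:ℝ) ≤ m ^ (p - 1) := Real.rpow_nonneg hm.le _
        linarith
    nlinarith
  have := (convex_Icc m M).norm_image_sub_le_of_norm_hasDerivWithin_le hderiv hbound hb ha
  simpa [Real.norm_eq_abs] using this

lemma hasDerivAt_absMul (p : ℝ) (hp : 0 < p) (x : ℝ) :
    HasDerivAt (fun z : ℝ => |z| ^ p * z) ((p + 1) * |x| ^ p) x := by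
  rcases lt_trichotomy x 0 with hx | rfl | hx
  · have h1 : HasDerivAt (fun z : ℝ => (-z) ^ p * z)
        (p * (-x) ^ (p - 1) * (-1) * x + (-x) ^ p * 1) x := by
      have hneg : HasDerivAt (fun z : ℝ => (-z) ^ p) (p * (-x) ^ (p - 1) * (-1)) x :=
        (Real.hasDerivAt_rpow_const (Or.inl (by linarith : -x ≠ 0))).comp x (hasDerivAt_neg x)
      exact hneg.mul (hasDerivAt_id x)
    have heq : (fun z : ℝ => |z| ^ p * z) =ᶠ[nhds x] (fun z : ℝ => (-z) ^ p * z) := by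
      filter_upwards [Iio_mem_nhds hx] with z hz
      rw [abs_of_neg hz]
    have hval : p * (-x) ^ (p - 1) * (-1) * x + (-x) ^ p * 1 = (p + 1) * |x| ^ p := by
      rw [abs_of_neg hx]
      have : (-x) ^ (p - 1) * (-x) = (-x) ^ p := by
        rw [← Real.rpow_add_one (by linarith : -x ≠ 0)]; ring_nf
      nlinarith [this]
    rw [← hval]
    exact h1.congr_of_eventuallyEq heq
  · rw [hasDerivAt_iff_tendsto_slope]
    have hval : (p + 1) * |(0:ℝ)| ^ p = 0 := by simp [Real.zero_rpow hp.ne']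
    rw [hval]
    have hc : Filter.Tendsto (fun h : ℝ => |h| ^ p) (nhds 0) (nhds 0) := by
      have h1 : ContinuousAt (fun t : ℝ => t ^ p) (|(0:ℝ)|) :=
        Real.continuousAt_rpow_const _ _ (Or.inr hp.le)
      have h2 := h1.comp (continuous_abs.continuousAt (x := (0:ℝ)))
      simpa [Function.comp_def, Real.zero_rpow hp.ne'] using h2.tendsto
    refine Filter.Tendsto.congr' ?_ (hc.mono_left nhdsWithin_le_nhds)
    filter_upwards [self_mem_nhdsWithin] with h hh
    simp only [Set.mem_compl_iff, Set.mem_singleton_iff] at hh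
    rw [slope_def_field]; field_simp [hh, Real.zero_rpow hp.ne']; simp
  · have h1 : HasDerivAt (fun z : ℝ => z ^ p * z)
        (p * x ^ (p - 1) * x + x ^ p * 1) x :=
      (Real.hasDerivAt_rpow_const (Or.inl hx.ne')).mul (hasDerivAt_id x)
    have heq : (fun z : ℝ => |z| ^ p * z) =ᶠ[nhds x] (fun z : ℝ => z ^ p * z) := by
      filter_upwards [Ioi_mem_nhds hx] with z hz
      rw [abs_of_pos hz]
    have hval : p * x ^ (p - 1) * x + x ^ p * 1 = (p + 1) * |x| ^ p := by
      rw [abs_of_pos hx]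
      have : x ^ (p - 1) * x = x ^ p := by
        rw [← Real.rpow_add_one hx.ne']; ring_nf
      nlinarith [this]
    rw [← hval]
    exact h1.congr_of_eventuallyEq heq

lemma contAux (p : ℝ) (hp : 0 < p) (x y : ℝ) :
    Continuous fun t : ℝ => (p + 1) * |x + t * y| ^ p * y := by
  have c1 : Continuous (fun a : ℝ => |a| ^ p) := continuous_iff_continuousAt.2 fun a =>
    (Real.continuousAt_rpow_const _ _ (Or.inr hp.le)).comp continuous_abs.continuousAt
  exact (continuous_const.mul (c1.comp (by continuity))).mul continuous_const

lemma ftc (p : ℝ) (hp : 0 < p) (x y : ℝ) :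
    (∫ t in (0:ℝ)..1, ((p + 1) * |x + t * y| ^ p * y)) =
      |x + y| ^ p * (x + y) - |x| ^ p * x := by
  have hg : ∀ t ∈ Set.uIcc (0:ℝ) 1, HasDerivAt (fun t : ℝ => |x + t * y| ^ p * (x + t * y))
      ((p + 1) * |x + t * y| ^ p * y) t := by
    intro t _
    have hl : HasDerivAt (fun t : ℝ => x + t * y) y t := by
      simpa using ((hasDerivAt_id t).mul_const y).const_add x
    have := (hasDerivAt_absMul p hp (x + t * y)).comp t hl
    simpa [mul_assoc, Function.comp_def] using this
  have := intervalIntegral.integral_eq_sub_of_hasDerivAt hg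
    ((contAux p hp x y).intervalIntegrable 0 1)
  simpa using this


/-- Quadratic expansion estimate for the energy-critical nonlinearity
`F(x) = |x|^{4/(N-2)} x`. -/
theorem critical_nonlinearity_expansion
    (N : ℕ) (hN : 3 ≤ N)
    (F : ℝ → ℝ) (hF : ∀ x : ℝ, F x = |x| ^ ((4 : ℝ) / ((N : ℝ) - 2)) * x) :
    ∃ C : ℝ, 0 < C ∧ ∀ x y : ℝ, x ≠ 0 →
      |F (x + y) - F x - ((N : ℝ) + 2) / ((N : ℝ) - 2) * |x| ^ ((4 : ℝ) / ((N : ℝ) - 2)) * y|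
        ≤ C * ((if |y| ≤ |x| then |y| ^ 2 * |x| ^ ((6 - (N : ℝ)) / ((N : ℝ) - 2)) else 0)
            + (if |x| < |y| then |y| ^ (((N : ℝ) + 2) / ((N : ℝ) - 2)) else 0)) := by
  have hN3 : (3:ℝ) ≤ (N:ℝ) := by exact_mod_cast hN
  set p : ℝ := 4 / ((N : ℝ) - 2) with hpdef
  have hd : (1:ℝ) ≤ (N:ℝ) - 2 := by linarith
  have hp : 0 < p := by rw [hpdef]; positivity
  have hq : ((N:ℝ) + 2) / ((N:ℝ) - 2) = p + 1 := by
    rw [hpdef]; field_simp; ring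
  have hr : (6 - (N:ℝ)) / ((N:ℝ) - 2) = p - 1 := by
    rw [hpdef]; field_simp; ring
  set C : ℝ := p * (p + 1) * ((2:ℝ) ^ (1 - p) + 2 ^ (p - 1)) + 5 * ((2:ℝ) ^ (p + 1) + 2 + p)
    with hCdef
  have h2p1 : (0:ℝ) < (2:ℝ) ^ (p + 1) := Real.rpow_pos_of_pos two_pos _
  have h2p2 : (0:ℝ) < (2:ℝ) ^ (1 - p) := Real.rpow_pos_of_pos two_pos _
  have h2p3 : (0:ℝ) < (2:ℝ) ^ (p - 1) := Real.rpow_pos_of_pos two_pos _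
  have hC : 0 < C := by rw [hCdef]; positivity
  refine ⟨C, hC, ?_⟩
  intro x y hx
  have hxpos : 0 < |x| := abs_pos.2 hx
  rw [hF (x + y), hF x, hq, hr]
  rcases le_or_gt |y| |x| with hyx | hyx
  · rw [if_pos hyx, if_neg (not_lt.2 hyx), add_zero]
    have hR0 : (0:ℝ) ≤ |y| ^ 2 * |x| ^ (p - 1) := by positivity
    rcases le_or_gt (2 * |y|) |x| with h2 | h2
    · -- integral case
      have int1 : IntervalIntegrable (fun t : ℝ => (p + 1) * |x + t * y| ^ p * y)
          MeasureTheory.volume 0 1 := (contAux p hp x y).intervalIntegrable 0 1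
      have int2 : IntervalIntegrable (fun _ : ℝ => (p + 1) * |x| ^ p * y)
          MeasureTheory.volume 0 1 := intervalIntegrable_const
      have key : |x + y| ^ p * (x + y) - |x| ^ p * x - (p + 1) * |x| ^ p * y =
          ∫ t in (0:ℝ)..1, ((p + 1) * |x + t * y| ^ p * y - (p + 1) * |x| ^ p * y) := by
        rw [intervalIntegral.integral_sub int1 int2, ftc p hp x y,
          intervalIntegral.integral_const]
        simp
      rw [key]
      set K : ℝ := p * (p + 1) * ((2:ℝ) ^ (1 - p) + 2 ^ (p - 1)) * (|y| ^ 2 * |x| ^ (p - 1))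
        with hKdef
      have hbd : ∀ t ∈ Set.uIoc (0:ℝ) 1,
          ‖(p + 1) * |x + t * y| ^ p * y - (p + 1) * |x| ^ p * y‖ ≤ K := by
        intro t ht
        rw [Set.uIoc_of_le zero_le_one] at ht
        have ht0 : 0 < t := ht.1
        have ht1 : t ≤ 1 := ht.2
        have hty : |t * y| ≤ |y| := by
          rw [abs_mul, abs_of_pos ht0]
          nlinarith [abs_nonneg y]
        have ha1 : |x| / 2 ≤ |x + t * y| := by
          have := abs_sub_abs_le_abs_sub x (-(t*y))
          have h2 : |x - -(t*y)| = |x + t*y| := by ring_nf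
          rw [h2, abs_neg] at this
          linarith
        have ha2 : |x + t * y| ≤ 2 * |x| := by
          calc |x + t * y| ≤ |x| + |t * y| := abs_add_le x (t*y)
            _ ≤ 2 * |x| := by linarith
        have hlip := rpowLip p (|x| / 2) (2 * |x|) (|x + t * y|) (|x|) hp (by linarith)
          ⟨ha1, ha2⟩ ⟨by linarith, by linarith⟩
        have habd : abs (|x + t * y| - |x|) ≤ |y| := by
          have h3 := abs_sub_abs_le_abs_sub (x + t * y) x
          have h4 := abs_sub_abs_le_abs_sub x (x + t * y)
          have h5 : |x + t * y - x| = |t * y| := by ring_nf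
          have h6 : |x - (x + t * y)| = |t * y| := by
            rw [show x - (x + t * y) = -(t*y) by ring, abs_neg]
          rw [h5] at h3; rw [h6] at h4
          rw [abs_sub_le_iff]; constructor <;> linarith
        have hm1 : (|x| / 2) ^ (p - 1) = (2:ℝ) ^ (1 - p) * |x| ^ (p - 1) := by
          rw [show |x| / 2 = 2⁻¹ * |x| by ring,
            Real.mul_rpow (by norm_num) (abs_nonneg x),
            Real.inv_rpow (by norm_num), ← Real.rpow_neg (by norm_num)]
          ring_nf
        have hm2 : (2 * |x|) ^ (p - 1) = (2:ℝ) ^ (p - 1) * |x| ^ (p - 1) :=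
          Real.mul_rpow (by norm_num) (abs_nonneg x)
        have hab : abs (|x + t * y| ^ p - |x| ^ p) ≤
            p * (((2:ℝ) ^ (1 - p) + 2 ^ (p - 1)) * |x| ^ (p - 1)) * |y| := by
          calc abs (|x + t * y| ^ p - |x| ^ p)
              ≤ p * ((|x| / 2) ^ (p - 1) + (2 * |x|) ^ (p - 1)) * abs (|x + t * y| - |x|) := hlip
            _ ≤ p * ((|x| / 2) ^ (p - 1) + (2 * |x|) ^ (p - 1)) * |y| := by
                apply mul_le_mul_of_nonneg_left habd
                have := Real.rpow_nonneg (by positivity : (0:ℝ) ≤ |x| / 2) (p - 1)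
                have := Real.rpow_nonneg (by positivity : (0:ℝ) ≤ 2 * |x|) (p - 1)
                positivity
            _ = p * (((2:ℝ) ^ (1 - p) + 2 ^ (p - 1)) * |x| ^ (p - 1)) * |y| := by
                rw [hm1, hm2]; ring
        calc ‖(p + 1) * |x + t * y| ^ p * y - (p + 1) * |x| ^ p * y‖
            = (p + 1) * abs (|x + t * y| ^ p - |x| ^ p) * |y| := by
              rw [show (p + 1) * |x + t * y| ^ p * y - (p + 1) * |x| ^ p * y
                  = (p + 1) * ((|x + t * y| ^ p - |x| ^ p) * y) by ring,
                Real.norm_eq_abs, abs_mul, abs_mul, abs_of_pos (by linarith : (0:ℝ) < p + 1)]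
              ring
          _ ≤ (p + 1) * (p * (((2:ℝ) ^ (1 - p) + 2 ^ (p - 1)) * |x| ^ (p - 1)) * |y|) * |y| := by
              apply mul_le_mul_of_nonneg_right
                (mul_le_mul_of_nonneg_left hab (by linarith)) (abs_nonneg y)
          _ = K := by rw [hKdef]; ring
      have := intervalIntegral.norm_integral_le_of_norm_le_const hbd
      rw [Real.norm_eq_abs] at this
      have hKC : K ≤ C * (|y| ^ 2 * |x| ^ (p - 1)) := by
        rw [hKdef, hCdef]
        apply mul_le_mul_of_nonneg_right _ hR0
        linarith [hp, h2p1]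
      calc |∫ t in (0:ℝ)..1, ((p + 1) * |x + t * y| ^ p * y - (p + 1) * |x| ^ p * y)|
          ≤ K * |1 - (0:ℝ)| := this
        _ = K := by norm_num
        _ ≤ C * (|y| ^ 2 * |x| ^ (p - 1)) := hKC
    · -- triangle, |y| ≤ |x| < 2|y|
      have tri : |(|x + y| ^ p * (x + y)) - |x| ^ p * x - (p + 1) * |x| ^ p * y|
          ≤ |x + y| ^ (p + 1) + |x| ^ (p + 1) + (p + 1) * |x| ^ p * |y| := by
        have t1 := abs_sub ((|x + y| ^ p * (x + y)) - |x| ^ p * x) ((p + 1) * |x| ^ p * y)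
        have t2 := abs_sub (|x + y| ^ p * (x + y)) (|x| ^ p * x)
        rw [absF p hp (x + y)] at t2
        rw [absF p hp x] at t2
        have t3 : |(p + 1) * |x| ^ p * y| = (p + 1) * |x| ^ p * |y| := by
          rw [abs_mul, abs_mul, abs_of_pos (by linarith : (0:ℝ) < p + 1),
            abs_of_nonneg (Real.rpow_nonneg (abs_nonneg x) p)]
        rw [t3] at t1
        linarith
      have e1 : |x + y| ^ (p + 1) ≤ (2:ℝ) ^ (p + 1) * |x| ^ (p + 1) := by
        have : |x + y| ≤ 2 * |x| := by
          calc |x + y| ≤ |x| + |y| := abs_add_le x y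
            _ ≤ 2 * |x| := by linarith
        calc |x + y| ^ (p + 1) ≤ (2 * |x|) ^ (p + 1) :=
              Real.rpow_le_rpow (abs_nonneg _) this (by linarith)
          _ = (2:ℝ) ^ (p + 1) * |x| ^ (p + 1) := Real.mul_rpow (by norm_num) (abs_nonneg x)
      have e3 : |x| ^ p * |y| ≤ |x| ^ (p + 1) := by
        rw [Real.rpow_add_one (abs_ne_zero.2 hx)]
        exact mul_le_mul_of_nonneg_left hyx (Real.rpow_nonneg (abs_nonneg x) p)
      have e4 : |x| ^ (p + 1) ≤ 4 * (|y| ^ 2 * |x| ^ (p - 1)) := by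
        have hsplit : |x| ^ (p + 1) = |x| ^ (p - 1) * |x| ^ 2 := by
          rw [← Real.rpow_natCast |x| 2, ← Real.rpow_add hxpos]
          congr 1
          push_cast
          ring
        rw [hsplit]
        have h5 : |x| ^ 2 ≤ 4 * |y| ^ 2 := by nlinarith [abs_nonneg x, abs_nonneg y]
        have h6 : (0:ℝ) ≤ |x| ^ (p - 1) := Real.rpow_nonneg (abs_nonneg x) _
        nlinarith
      have hxp1 : (0:ℝ) ≤ |x| ^ (p + 1) := Real.rpow_nonneg (abs_nonneg x) _
      have e3' : (p + 1) * |x| ^ p * |y| ≤ (p + 1) * |x| ^ (p + 1) := by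
        rw [mul_assoc]
        exact mul_le_mul_of_nonneg_left e3 (by linarith)
      have hfirst : (0:ℝ) ≤ p * (p + 1) * ((2:ℝ) ^ (1 - p) + 2 ^ (p - 1)) := by positivity
      calc |(|x + y| ^ p * (x + y)) - |x| ^ p * x - (p + 1) * |x| ^ p * y|
          ≤ |x + y| ^ (p + 1) + |x| ^ (p + 1) + (p + 1) * |x| ^ p * |y| := tri
        _ ≤ ((2:ℝ) ^ (p + 1) + 2 + p) * |x| ^ (p + 1) := by linarith [e1, e3', hxp1]
        _ ≤ ((2:ℝ) ^ (p + 1) + 2 + p) * (4 * (|y| ^ 2 * |x| ^ (p - 1))) := by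
            apply mul_le_mul_of_nonneg_left e4 (by positivity)
        _ = (((2:ℝ) ^ (p + 1) + 2 + p) * 4) * (|y| ^ 2 * |x| ^ (p - 1)) := by ring
        _ ≤ C * (|y| ^ 2 * |x| ^ (p - 1)) := by
            apply mul_le_mul_of_nonneg_right _ hR0
            rw [hCdef]; linarith [hfirst, h2p1, hp]
  · rw [if_neg (not_le.2 hyx), if_pos hyx, zero_add]
    have hy0 : 0 < |y| := lt_trans hxpos hyx
    have hyp1 : (0:ℝ) ≤ |y| ^ (p + 1) := Real.rpow_nonneg (abs_nonneg y) _
    have tri : |(|x + y| ^ p * (x + y)) - |x| ^ p * x - (p + 1) * |x| ^ p * y|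
        ≤ |x + y| ^ (p + 1) + |x| ^ (p + 1) + (p + 1) * |x| ^ p * |y| := by
      have t1 := abs_sub ((|x + y| ^ p * (x + y)) - |x| ^ p * x) ((p + 1) * |x| ^ p * y)
      have t2 := abs_sub (|x + y| ^ p * (x + y)) (|x| ^ p * x)
      rw [absF p hp (x + y)] at t2
      rw [absF p hp x] at t2
      have t3 : |(p + 1) * |x| ^ p * y| = (p + 1) * |x| ^ p * |y| := by
        rw [abs_mul, abs_mul, abs_of_pos (by linarith : (0:ℝ) < p + 1),
          abs_of_nonneg (Real.rpow_nonneg (abs_nonneg x) p)]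
      rw [t3] at t1
      linarith
    have e1 : |x + y| ^ (p + 1) ≤ (2:ℝ) ^ (p + 1) * |y| ^ (p + 1) := by
      have : |x + y| ≤ 2 * |y| := by
        calc |x + y| ≤ |x| + |y| := abs_add_le x y
          _ ≤ 2 * |y| := by linarith
      calc |x + y| ^ (p + 1) ≤ (2 * |y|) ^ (p + 1) :=
            Real.rpow_le_rpow (abs_nonneg _) this (by linarith)
        _ = (2:ℝ) ^ (p + 1) * |y| ^ (p + 1) := Real.mul_rpow (by norm_num) (abs_nonneg y)
    have e2 : |x| ^ (p + 1) ≤ |y| ^ (p + 1) :=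
      Real.rpow_le_rpow (abs_nonneg x) hyx.le (by linarith)
    have e3 : |x| ^ p * |y| ≤ |y| ^ (p + 1) := by
      rw [Real.rpow_add_one (abs_ne_zero.2 (abs_pos.1 hy0))]
      exact mul_le_mul_of_nonneg_right
        (Real.rpow_le_rpow (abs_nonneg x) hyx.le hp.le) (abs_nonneg y)
    calc |(|x + y| ^ p * (x + y)) - |x| ^ p * x - (p + 1) * |x| ^ p * y|
        ≤ |x + y| ^ (p + 1) + |x| ^ (p + 1) + (p + 1) * |x| ^ p * |y| := tri
      _ ≤ ((2:ℝ) ^ (p + 1) + 2 + p) * |y| ^ (p + 1) := by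
          have e3' : (p + 1) * |x| ^ p * |y| ≤ (p + 1) * |y| ^ (p + 1) := by
            rw [mul_assoc]
            exact mul_le_mul_of_nonneg_left e3 (by linarith)
          linarith [e1, e2, e3']
      _ ≤ C * |y| ^ (p + 1) := by
          apply mul_le_mul_of_nonneg_right _ hyp1
          have hfirst : (0:ℝ) ≤ p * (p + 1) * ((2:ℝ) ^ (1 - p) + 2 ^ (p - 1)) := by positivity
          rw [hCdef]; linarith [hfirst, h2p1, hp]
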